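/- Let Q be symmetric positive semidefinite with smallest nonzero eigenvalue λ_t, and let H be symmetric with mI ⪯ H ⪯ MI for some 0 < m ≤ M, and suppose λ_max(Q) ≤ L. Then for any vector e, ‖e‖²_Q − ⟨e, QHQe⟩²/(eᵀ QHQHQ e) ≤ (1 − mλ_t/(ML)) ‖e‖²_Q (with the convention that the subtracted fraction is 0 when QHQe = 0 and Qe = 0), establishing a linear contraction factor 1 − mλ_t/(ML) ∈ [0,1). -/

import Mathlib

open Matrix

lemma poly_psd {n : ℕ} {A : Matrix (Fin n) (Fin n) ℝ} (hA : A.IsHermitian) (α β γ : ℝ)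
    (h : ∀ i, 0 ≤ α + β * hA.eigenvalues i + γ * hA.eigenvalues i ^ 2) :
    (α • (1 : Matrix (Fin n) (Fin n) ℝ) + β • A + γ • (A * A)).PosSemidef := by
  set U : Matrix (Fin n) (Fin n) ℝ := (hA.eigenvectorUnitary : Matrix (Fin n) (Fin n) ℝ) with hUdef
  have hUU : star U * U = 1 := (Matrix.mem_unitaryGroup_iff').mp (hA.eigenvectorUnitary).2
  have hUU' : U * star U = 1 := (Matrix.mem_unitaryGroup_iff).mp (hA.eigenvectorUnitary).2
  set D : Matrix (Fin n) (Fin n) ℝ := diagonal (RCLike.ofReal ∘ hA.eigenvalues) with hDdef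
  have hspec : A = U * D * star U := hA.spectral_theorem
  have hone : (1 : Matrix (Fin n) (Fin n) ℝ) = U * (1 : Matrix (Fin n) (Fin n) ℝ) * star U := by
    rw [Matrix.mul_one, hUU']
  have hAA : A * A = U * (D * D) * star U := by
    rw [hspec]; simp only [Matrix.mul_assoc]
    rw [← Matrix.mul_assoc (star U) U, hUU, Matrix.one_mul]
  have hdiag : (diagonal fun i => α + β * hA.eigenvalues i + γ * hA.eigenvalues i ^ 2)
      = α • (1 : Matrix (Fin n) (Fin n) ℝ) + β • D + γ • (D * D) := by
    ext i j
    rcases eq_or_ne i j with rfl | hij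
    · simp [hDdef, diagonal_mul_diagonal, pow_two, Matrix.one_apply_eq]
    · simp [hDdef, diagonal_mul_diagonal, diagonal_apply_ne _ hij, Matrix.one_apply_ne hij]
  have key : α • (1 : Matrix (Fin n) (Fin n) ℝ) + β • A + γ • (A * A)
      = U * (diagonal fun i => α + β * hA.eigenvalues i + γ * hA.eigenvalues i ^ 2) * star U := by
    conv_lhs => rw [hAA, hspec, hone]
    rw [hdiag]
    simp only [Matrix.smul_mul, Matrix.mul_smul, Matrix.add_mul, Matrix.mul_add, Matrix.mul_assoc]
  rw [key]
  exact (Matrix.posSemidef_diagonal_iff.mpr h).mul_mul_conjTranspose_same U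

lemma dot_symm {n : ℕ} {A : Matrix (Fin n) (Fin n) ℝ} (hAt : Aᵀ = A) (x y : Fin n → ℝ) :
    x ⬝ᵥ A *ᵥ y = (A *ᵥ x) ⬝ᵥ y := by
  rw [dotProduct_mulVec, ← mulVec_transpose, hAt]

lemma poly_qf {n : ℕ} {A : Matrix (Fin n) (Fin n) ℝ} (hA : A.IsHermitian) (α β γ : ℝ)
    (h : ∀ i, 0 ≤ α + β * hA.eigenvalues i + γ * hA.eigenvalues i ^ 2) (x : Fin n → ℝ) :
    0 ≤ α * (x ⬝ᵥ x) + β * (x ⬝ᵥ A *ᵥ x) + γ * ((A *ᵥ x) ⬝ᵥ (A *ᵥ x)) := by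
  have hAt : Aᵀ = A := by rw [← conjTranspose_eq_transpose_of_trivial]; exact hA
  have h0 := (poly_psd hA α β γ h).dotProduct_mulVec_nonneg x
  have h2 : x ⬝ᵥ ((A * A) *ᵥ x) = (A *ᵥ x) ⬝ᵥ (A *ᵥ x) := by
    rw [← mulVec_mulVec, dot_symm hAt]
  simp only [star_trivial, add_mulVec, smul_mulVec, one_mulVec,
    dotProduct_add, dotProduct_smul, smul_eq_mul] at h0
  rw [h2] at h0
  linarith

theorem linear_contraction_factor {n : ℕ}
    (Q H : Matrix (Fin n) (Fin n) ℝ) (hQ : Q.PosSemidef) (hH : H.IsSymm)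
    (m M L lamt : ℝ) (hm : 0 < m) (hmM : m ≤ M)
    -- m I ⪯ H ⪯ M I
    (hHlow : (H - m • (1 : Matrix (Fin n) (Fin n) ℝ)).PosSemidef)
    (hHup : ((M • (1 : Matrix (Fin n) (Fin n) ℝ)) - H).PosSemidef)
    -- lamt is the smallest nonzero eigenvalue of Q
    (hlt : 0 < lamt) (hmem : lamt ∈ spectrum ℝ Q)
    (hmin : ∀ lam ∈ spectrum ℝ Q, lam = 0 ∨ lamt ≤ lam)
    -- λ_max(Q) ≤ L
    (hLmax : ∀ lam ∈ spectrum ℝ Q, lam ≤ L) :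
    ∀ e : Fin n → ℝ,
      e ⬝ᵥ Q *ᵥ e - (e ⬝ᵥ Q *ᵥ (H *ᵥ (Q *ᵥ e))) ^ 2
          / (e ⬝ᵥ Q *ᵥ (H *ᵥ (Q *ᵥ (H *ᵥ (Q *ᵥ e)))))
        ≤ (1 - m * lamt / (M * L)) * (e ⬝ᵥ Q *ᵥ e) := by
  intro e
  have hM0 : 0 < M := lt_of_lt_of_le hm hmM
  have hL0 : 0 < L := lt_of_lt_of_le hlt (hLmax lamt hmem)
  have hQt : Qᵀ = Q := by rw [← conjTranspose_eq_transpose_of_trivial]; exact hQ.1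
  have hHt : Hᵀ = H := hH
  have hH' : H.IsHermitian := by
    show Hᴴ = H; rw [conjTranspose_eq_transpose_of_trivial]; exact hH
  set v := Q *ᵥ e with hv
  set w := H *ᵥ v with hw
  have ha : e ⬝ᵥ Q *ᵥ w = v ⬝ᵥ w := by rw [dot_symm hQt]
  have hb : e ⬝ᵥ Q *ᵥ (H *ᵥ (Q *ᵥ w)) = w ⬝ᵥ Q *ᵥ w := by
    rw [dot_symm hQt, ← hv, dot_symm hHt, ← hw]
  rw [ha, hb]
  set d := e ⬝ᵥ Q *ᵥ e with hd
  set c := v ⬝ᵥ v with hc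
  set a := v ⬝ᵥ w with haa
  set b := w ⬝ᵥ Q *ᵥ w with hbb
  have hd0 : 0 ≤ d := by simpa using hQ.dotProduct_mulVec_nonneg e
  have hb0 : 0 ≤ b := by simpa using hQ.dotProduct_mulVec_nonneg w
  -- (i) m*c ≤ a
  have hi : m * c ≤ a := by
    have h1 := hHlow.dotProduct_mulVec_nonneg v
    simp only [star_trivial, sub_mulVec, smul_mulVec, one_mulVec,
      dotProduct_sub, dotProduct_smul, smul_eq_mul] at h1
    rw [haa, hc, hw]
    linarith
  -- spectrum facts for Q
  have hQspec : ∀ i, hQ.1.eigenvalues i ∈ spectrum ℝ Q := fun i =>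
    hQ.1.eigenvalues_mem_spectrum_real i
  -- (ii) x Q x ≤ L * (x ⬝ x)
  have hQL : ∀ x : Fin n → ℝ, x ⬝ᵥ Q *ᵥ x ≤ L * (x ⬝ᵥ x) := by
    intro x
    have := poly_qf hQ.1 L (-1) 0 (fun i => by
      have h1 := hLmax _ (hQspec i); nlinarith) x
    linarith
  -- (iv) lamt * d ≤ c
  have hQlam : lamt * d ≤ c := by
    have := poly_qf hQ.1 0 (-lamt) 1 (fun i => by
      have h1 := hQ.eigenvalues_nonneg i
      rcases hmin _ (hQspec i) with h2 | h2 <;> nlinarith) e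
    rw [hc, hv, hd]
    linarith
  -- eigenvalue bounds for H and (iii) w ⬝ w ≤ M * a
  have hH2 : w ⬝ᵥ w ≤ M * a := by
    have hev : ∀ i, 0 ≤ 0 + M * hH'.eigenvalues i + (-1) * hH'.eigenvalues i ^ 2 := by
      intro i
      set x : Fin n → ℝ := ⇑(hH'.eigenvectorBasis i) with hx
      have hxe : H *ᵥ x = hH'.eigenvalues i • x := hH'.mulVec_eigenvectorBasis i
      have hxnz : x ≠ 0 := by
        intro h0
        exact hH'.eigenvectorBasis.orthonormal.ne_zero i (by ext j; simpa [hx] using congrFun h0 j)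
      have hxx : 0 < x ⬝ᵥ x := by
        rcases (lt_or_eq_of_le (Finset.sum_nonneg fun j _ => mul_self_nonneg (x j)) :
          (0 : ℝ) < x ⬝ᵥ x ∨ _) with h | h
        · exact h
        · exact absurd (dotProduct_self_eq_zero.mp h.symm) hxnz
      have h1 := hHlow.dotProduct_mulVec_nonneg x
      have h2 := hHup.dotProduct_mulVec_nonneg x
      simp only [star_trivial, sub_mulVec, smul_mulVec, one_mulVec,
        dotProduct_sub, dotProduct_smul, smul_eq_mul, hxe] at h1 h2
      have hm1 : m ≤ hH'.eigenvalues i :=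
        le_of_mul_le_mul_right (by linarith) hxx
      have hm2 : hH'.eigenvalues i ≤ M :=
        le_of_mul_le_mul_right (by linarith) hxx
      nlinarith
    have := poly_qf hH' 0 M (-1) hev v
    rw [haa, hw]
    nlinarith
  -- main case split
  by_cases hcz : c = 0
  · have hv0 : v = 0 := dotProduct_self_eq_zero.mp (hc ▸ hcz)
    have hdz : d = 0 := le_antisymm (by nlinarith) hd0
    have haz : a = 0 := by rw [haa, hv0, zero_dotProduct]
    rw [hdz, haz]
    simp
  · have hc0 : 0 ≤ c := Finset.sum_nonneg fun j _ => mul_self_nonneg (v j)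
    have hc' : 0 < c := lt_of_le_of_ne hc0 (Ne.symm hcz)
    have ha' : 0 < a := lt_of_lt_of_le (by positivity) hi
    have hb' : 0 < b := by
      rcases lt_or_eq_of_le hb0 with h | h
      · exact h
      · exfalso
        have hz : Q *ᵥ w = 0 := (hQ.dotProduct_mulVec_zero_iff w).mp (by
          rw [star_trivial]; exact h.symm)
        have : a = 0 := by rw [← ha, hz, dotProduct_zero]
        linarith
    have hble : b ≤ M * L * a := by
      have h1 := hQL w
      nlinarith
    have h3 : a ^ 2 / (M * L * a) ≤ a ^ 2 / b :=
      div_le_div_of_nonneg_left (sq_nonneg a) hb' hble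
    have h4 : a ^ 2 / (M * L * a) = a / (M * L) := by
      field_simp
    have h5 : m * lamt / (M * L) * d ≤ a / (M * L) := by
      rw [div_mul_eq_mul_div]
      apply (div_le_div_iff_of_pos_right (by positivity)).mpr
      nlinarith
    nlinarith [h3, h4.symm.le, h4.le, h5]
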